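/- For n ≥ 1, there exists a subset V of the hypercube {−1,1}^n such that |V| ≥ 2^{n/8} and for any two distinct v, w ∈ V, the ℓ¹-distance satisfies ‖v − w‖₁ ≥ n/2 (equivalently, the Hamming distance between v and w is at least n/4). -/

import Mathlib

open Finset

/-- Hamming distance on boolean vectors. -/
private def hd {n : ℕ} (v w : Fin n → Bool) : ℕ :=
  (Finset.univ.filter fun i => v i ≠ w i).card

private lemma hd_symm {n : ℕ} (v w : Fin n → Bool) : hd v w = hd w v := by
  unfold hd
  congr 1
  ext i
  simp [ne_comm]

private lemma hd_self {n : ℕ} (v : Fin n → Bool) : hd v v = 0 := by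
  simp [hd]

/-- Ball counting: the Hamming ball of radius `r` has at most `∑_{k≤r} C(n,k)` points. -/
private lemma ball_card {n r : ℕ} (v : Fin n → Bool) :
    (Finset.univ.filter fun w : Fin n → Bool => hd v w ≤ r).card
      ≤ ∑ k ∈ Finset.range (r + 1), n.choose k := by
  classical
  have h1 : (Finset.univ.filter fun w : Fin n → Bool => hd v w ≤ r).card
      ≤ ((Finset.range (r + 1)).biUnion fun k =>
          Finset.powersetCard k (Finset.univ : Finset (Fin n))).card := by
    apply Finset.card_le_card_of_injOn
      (fun w => Finset.univ.filter fun i => v i ≠ w i)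
    · intro w hw
      simp only [Finset.mem_coe, Finset.mem_filter, Finset.mem_univ, true_and] at hw
      simp only [Finset.mem_coe, Finset.mem_biUnion, Finset.mem_range, Finset.mem_powersetCard]
      exact ⟨(Finset.univ.filter fun i => v i ≠ w i).card,
        Nat.lt_succ_of_le hw, Finset.subset_univ _, rfl⟩
    · intro w1 h1 w2 h2 heq
      funext i
      have heq' : (Finset.univ.filter fun i => v i ≠ w1 i)
          = (Finset.univ.filter fun i => v i ≠ w2 i) := heq
      have : (i ∈ Finset.univ.filter fun i => v i ≠ w1 i) ↔
          (i ∈ Finset.univ.filter fun i => v i ≠ w2 i) := by rw [heq']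
      simp only [Finset.mem_filter, Finset.mem_univ, true_and] at this
      cases hv : v i <;> cases hw1 : w1 i <;> cases hw2 : w2 i <;>
        simp [hv, hw1, hw2] at this ⊢
  refine h1.trans ?_
  refine Finset.card_biUnion_le.trans ?_
  apply Finset.sum_le_sum
  intro k _
  rw [Finset.card_powersetCard, Finset.card_univ, Fintype.card_fin]

/-- Sum-of-binomials bound. -/
private lemma sum_choose_bound (n r : ℕ) (hr : r ≤ n) :
    (∑ k ∈ Finset.range (r + 1), (n.choose k : ℝ)) ≤ 4 ^ r * (4 / 3) ^ (n - r) := by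
  have hpq : ((1 : ℝ) / 4 + 3 / 4) ^ n = 1 := by norm_num
  have hterm : ∀ k ∈ Finset.range (r + 1),
      (n.choose k : ℝ) * ((1 / 4) ^ r * (3 / 4) ^ (n - r))
        ≤ (1 / 4) ^ k * (3 / 4) ^ (n - k) * (n.choose k : ℝ) := by
    intro k hk
    rw [Finset.mem_range, Nat.lt_succ_iff] at hk
    rw [mul_comm]
    apply mul_le_mul_of_nonneg_right _ (by positivity)
    have e1 : (1/4:ℝ) ^ k * (1/4) ^ (r - k) = (1/4:ℝ) ^ r := by
      rw [← pow_add]; congr 1; omega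
    have e2 : (3/4:ℝ) ^ (r - k) * (3/4) ^ (n - r) = (3/4:ℝ) ^ (n - k) := by
      rw [← pow_add]; congr 1; omega
    have h14 : ((1:ℝ)/4) ^ (r - k) ≤ ((3:ℝ)/4) ^ (r - k) := by
      apply pow_le_pow_left₀ (by norm_num) (by norm_num)
    calc (1/4:ℝ) ^ r * (3/4) ^ (n - r)
        = (1/4:ℝ) ^ k * (1/4) ^ (r - k) * (3/4) ^ (n - r) := by rw [e1]
      _ ≤ (1/4:ℝ) ^ k * (3/4) ^ (r - k) * (3/4) ^ (n - r) := by
          apply mul_le_mul_of_nonneg_right _ (by positivity)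
          exact mul_le_mul_of_nonneg_left h14 (by positivity)
      _ = (1/4:ℝ) ^ k * (3/4) ^ (n - k) := by rw [mul_assoc, e2]
  have hsum : (∑ k ∈ Finset.range (r + 1), (n.choose k : ℝ))
      * ((1 / 4) ^ r * (3 / 4) ^ (n - r)) ≤ 1 := by
    rw [Finset.sum_mul]
    calc ∑ k ∈ Finset.range (r + 1),
          (n.choose k : ℝ) * ((1 / 4) ^ r * (3 / 4) ^ (n - r))
        ≤ ∑ k ∈ Finset.range (r + 1),
            (1 / 4 : ℝ) ^ k * (3 / 4) ^ (n - k) * (n.choose k : ℝ) :=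
          Finset.sum_le_sum hterm
      _ ≤ ∑ k ∈ Finset.range (n + 1),
            (1 / 4 : ℝ) ^ k * (3 / 4) ^ (n - k) * (n.choose k : ℝ) := by
          apply Finset.sum_le_sum_of_subset_of_nonneg
          · intro k hk
            rw [Finset.mem_range] at hk ⊢
            omega
          · intro k _ _
            positivity
      _ = ((1 : ℝ) / 4 + 3 / 4) ^ n := (add_pow _ _ _).symm
      _ = 1 := hpq
  have hpos : (0:ℝ) < (1 / 4) ^ r * (3 / 4) ^ (n - r) := by positivity
  rw [← le_div_iff₀ hpos] at hsum
  refine hsum.trans (le_of_eq ?_)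
  rw [one_div, mul_inv, ← inv_pow, ← inv_pow]
  norm_num

private lemma base_ineq : (2:ℝ) ^ ((1:ℝ)/8) * ((3:ℝ) ^ ((1:ℝ)/4) * (4/3)) ≤ 2 := by
  apply le_of_pow_le_pow_left₀ (n := 8) (by norm_num) (by norm_num)
  have c1 : ((2:ℝ) ^ ((1:ℝ)/8)) ^ (8:ℕ) = 2 := by
    rw [← Real.rpow_natCast ((2:ℝ) ^ ((1:ℝ)/8)) 8, ← Real.rpow_mul (by norm_num)]
    norm_num
  have c2 : ((3:ℝ) ^ ((1:ℝ)/4)) ^ (8:ℕ) = 9 := by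
    rw [← Real.rpow_natCast ((3:ℝ) ^ ((1:ℝ)/4)) 8, ← Real.rpow_mul (by norm_num)]
    rw [show ((1:ℝ)/4 * (8:ℕ)) = 2 by push_cast; ring]
    rw [show (2:ℝ) = ((2:ℕ):ℝ) by norm_num, Real.rpow_natCast]
    norm_num
  rw [mul_pow, mul_pow, c1, c2]
  norm_num

/-- Gilbert–Varshamov: there is a subset of the hypercube `{-1,1}^n` of cardinality at
least `2^(n/8)` whose elements are pairwise at `ℓ¹`-distance at least `n/2`. -/
theorem stmt_9 (n : ℕ) (hn : 1 ≤ n) :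
    ∃ 𝒱 : Finset (Fin n → ℝ),
      (∀ v ∈ 𝒱, ∀ i, v i = -1 ∨ v i = 1) ∧
      (2 : ℝ) ^ ((n : ℝ) / 8) ≤ (𝒱.card : ℝ) ∧
      (∀ v ∈ 𝒱, ∀ w ∈ 𝒱, v ≠ w → (n : ℝ) / 2 ≤ ∑ i, |v i - w i|) := by
  classical
  set r : ℕ := (n - 1) / 4 with hr
  have hrn : r ≤ n := by
    have := Nat.div_le_self (n - 1) 4
    omega
  have h4r : 4 * r ≤ n := by
    have := Nat.div_mul_le_self (n - 1) 4
    omega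
  -- maximal code
  set good : Finset (Fin n → Bool) → Prop :=
    fun S => ∀ v ∈ S, ∀ w ∈ S, v ≠ w → n ≤ 4 * hd v w with hgood
  obtain ⟨V, hVgood, hVmax⟩ : ∃ V, good V ∧ ∀ S, good S → S.card ≤ V.card := by
    have hne : (Finset.univ.powerset.filter fun S : Finset (Fin n → Bool) => good S).Nonempty := by
      refine ⟨∅, ?_⟩
      simp [hgood]
    obtain ⟨V, hV, hmax⟩ := Finset.exists_max_image _ Finset.card hne
    refine ⟨V, (Finset.mem_filter.1 hV).2, fun S hS => hmax S ?_⟩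
    exact Finset.mem_filter.2 ⟨Finset.mem_powerset.2 (Finset.subset_univ S), hS⟩
  -- covering property
  have hcover : ∀ u : Fin n → Bool, ∃ v ∈ V, hd v u ≤ r := by
    intro u
    by_contra hcon
    push_neg at hcon
    have hu : u ∉ V := by
      intro huV
      have := hcon u huV
      rw [hd_self] at this
      omega
    have hgood' : good (insert u V) := by
      intro v hv w hw hne
      have key : ∀ x ∈ V, n ≤ 4 * hd u x := by
        intro x hx
        have h1 := hcon x hx
        rw [hd_symm] at h1
        have : (n - 1) / 4 < hd u x := h1
        rw [Nat.div_lt_iff_lt_mul (by norm_num)] at this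
        omega
      rcases Finset.mem_insert.1 hv with hv1 | hv1 <;>
        rcases Finset.mem_insert.1 hw with hw1 | hw1
      · exact absurd (hv1.trans hw1.symm) hne
      · rw [hv1]; exact key w hw1
      · rw [hw1, hd_symm]; exact key v hv1
      · exact hVgood v hv1 w hw1 hne
    have := hVmax _ hgood'
    rw [Finset.card_insert_of_notMem hu] at this
    omega
  -- counting
  set B : ℕ := ∑ k ∈ Finset.range (r + 1), n.choose k with hB
  have hcount : 2 ^ n ≤ V.card * B := by
    have hsub : (Finset.univ : Finset (Fin n → Bool)) ⊆
        V.biUnion fun v => Finset.univ.filter fun w => hd v w ≤ r := by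
      intro u _
      obtain ⟨v, hv, hvu⟩ := hcover u
      exact Finset.mem_biUnion.2 ⟨v, hv, by simp [hvu]⟩
    calc 2 ^ n = (Finset.univ : Finset (Fin n → Bool)).card := by
          simp [Finset.card_univ]
      _ ≤ (V.biUnion fun v => Finset.univ.filter fun w => hd v w ≤ r).card :=
          Finset.card_le_card hsub
      _ ≤ ∑ v ∈ V, (Finset.univ.filter fun w => hd v w ≤ r).card :=
          Finset.card_biUnion_le
      _ ≤ ∑ _v ∈ V, B := Finset.sum_le_sum fun v _ => ball_card v
      _ = V.card * B := by rw [Finset.sum_const, smul_eq_mul]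
  -- real cardinality bound
  have hcard : (2 : ℝ) ^ ((n : ℝ) / 8) ≤ (V.card : ℝ) := by
    have hBpos : (0:ℝ) < 4 ^ r * (4 / 3) ^ (n - r) := by positivity
    have h1 : (2:ℝ) ^ n ≤ (V.card : ℝ) * (4 ^ r * (4 / 3) ^ (n - r)) := by
      have hc : (2:ℝ) ^ n ≤ (V.card : ℝ) * (B : ℝ) := by
        exact_mod_cast hcount
      refine hc.trans ?_
      apply mul_le_mul_of_nonneg_left _ (by positivity)
      push_cast [hB]
      exact sum_choose_bound n r hrn
    -- key: 2^(n/8) * (4^r * (4/3)^(n-r)) ≤ 2^n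
    have hkey : (2:ℝ) ^ ((n : ℝ) / 8) * (4 ^ r * (4 / 3) ^ (n - r)) ≤ (2:ℝ) ^ n := by
      have e0 : (4:ℝ) ^ r * (4 / 3) ^ (n - r) = 3 ^ r * (4 / 3) ^ n := by
        calc (4:ℝ) ^ r * (4/3) ^ (n - r)
            = ((3:ℝ) * (4/3)) ^ r * (4/3) ^ (n - r) := by norm_num
          _ = 3 ^ r * ((4/3) ^ r * (4/3) ^ (n - r)) := by rw [mul_pow]; ring
          _ = 3 ^ r * (4/3) ^ (r + (n - r)) := by rw [pow_add]
          _ = 3 ^ r * (4/3) ^ n := by rw [Nat.add_sub_cancel' hrn]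
      have e3 : (3:ℝ) ^ r ≤ ((3:ℝ) ^ ((1:ℝ)/4)) ^ n := by
        have : (3:ℝ) ^ r = (3:ℝ) ^ ((r:ℕ):ℝ) := (Real.rpow_natCast 3 r).symm
        rw [this, ← Real.rpow_natCast ((3:ℝ) ^ ((1:ℝ)/4)) n, ← Real.rpow_mul (by norm_num)]
        apply Real.rpow_le_rpow_of_exponent_le (by norm_num)
        have : (4:ℝ) * r ≤ n := by exact_mod_cast h4r
        linarith
      have e1 : (2:ℝ) ^ ((n : ℝ) / 8) = ((2:ℝ) ^ ((1:ℝ)/8)) ^ n := by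
        rw [← Real.rpow_natCast ((2:ℝ) ^ ((1:ℝ)/8)) n, ← Real.rpow_mul (by norm_num)]
        ring_nf
      calc (2:ℝ) ^ ((n : ℝ) / 8) * (4 ^ r * (4 / 3) ^ (n - r))
          = ((2:ℝ) ^ ((1:ℝ)/8)) ^ n * (3 ^ r * (4/3) ^ n) := by rw [e0, e1]
        _ ≤ ((2:ℝ) ^ ((1:ℝ)/8)) ^ n * (((3:ℝ) ^ ((1:ℝ)/4)) ^ n * (4/3) ^ n) := by
            apply mul_le_mul_of_nonneg_left _ (by positivity)
            exact mul_le_mul_of_nonneg_right e3 (by positivity)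
        _ = ((2:ℝ) ^ ((1:ℝ)/8) * ((3:ℝ) ^ ((1:ℝ)/4) * (4/3))) ^ n := by
            rw [mul_pow, mul_pow]
        _ ≤ (2:ℝ) ^ n := pow_le_pow_left₀ (by positivity) base_ineq n
    have := hkey.trans h1
    exact le_of_mul_le_mul_right (by linarith [this]) hBpos
  -- map to ±1 vectors
  set f : (Fin n → Bool) → (Fin n → ℝ) := fun v i => if v i then 1 else -1 with hf
  have hfinj : Function.Injective f := by
    intro v w hvw
    funext i
    have : f v i = f w i := by rw [hvw]
    simp only [hf] at this
    cases hv : v i <;> cases hw : w i <;> simp [hv, hw] at this ⊢ <;> norm_num at this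
  refine ⟨V.image f, ?_, ?_, ?_⟩
  · intro v hv i
    obtain ⟨u, _, rfl⟩ := Finset.mem_image.1 hv
    simp only [hf]
    cases u i <;> simp
  · rwa [Finset.card_image_of_injective _ hfinj]
  · intro v hv w hw hvw
    obtain ⟨a, ha, rfl⟩ := Finset.mem_image.1 hv
    obtain ⟨b, hb, rfl⟩ := Finset.mem_image.1 hw
    have hab : a ≠ b := fun h => hvw (by rw [h])
    have hdist := hVgood a ha b hb hab
    have hsum : ∑ i, |f a i - f b i| = 2 * (hd a b : ℝ) := by
      have he : ∀ i, |f a i - f b i| = if a i = b i then 0 else 2 := by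
        intro i
        simp only [hf]
        cases hai : a i <;> cases hbi : b i <;> simp [hai, hbi] <;> norm_num
      rw [Finset.sum_congr rfl fun i _ => he i, Finset.sum_ite, Finset.sum_const,
        Finset.sum_const, hd]
      simp [mul_comm]
    rw [hsum]
    have : (n:ℝ) ≤ 4 * (hd a b : ℝ) := by exact_mod_cast hdist
    linarith
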